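/- arXiv:1610.06646 — 5 statements merged into one kernel-verified Lean document; each statement's English description precedes it below -/
import Mathlib

section
/- On the group algebra ℂS_3, the operators R(z,k) satisfy the parameter-dependent Yang–Baxter equation: for all real numbers x and y, R(x,1)∘R(x+y,2)∘R(y,1) = R(y,2)∘R(x+y,1)∘R(x,2). -/
/-- The Yang–Baxter scattering gate `R(z,t) = (1+z²)^{-1/2}·(I + i z·L_{(t,t+1)})` on the
group algebra `ℂS_n`, realized as left multiplication by the corresponding group-algebra
element; `t : Fin (n-1)` encodes the adjacent transposition of (0-indexed) positions
`t` and `t+1`. -/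
noncomputable def BallPerm.Rgate (n : ℕ) (z : ℝ) (t : Fin (n - 1)) :
    Module.End ℂ (MonoidAlgebra ℂ (Equiv.Perm (Fin n))) :=
  LinearMap.mulLeft ℂ
    (((Real.sqrt (1 + z ^ 2))⁻¹ : ℂ) •
      ((1 : MonoidAlgebra ℂ (Equiv.Perm (Fin n)))
        + (Complex.I * z) •
          MonoidAlgebra.single
            (Equiv.swap (⟨t.1, by have := t.isLt; omega⟩ : Fin n)
              (⟨t.1 + 1, by have := t.isLt; omega⟩ : Fin n)) (1 : ℂ)))

lemma yb_ring {R : Type*} [Ring R] [Algebra ℂ R] (a b : R)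
    (ha : a * a = 1) (hb : b * b = 1) (hbr : a * (b * a) = b * (a * b)) (p q : ℂ) :
    (1 + p • a) * ((1 + (p + q) • b) * (1 + q • a))
      = (1 + q • b) * ((1 + (p + q) • a) * (1 + p • b)) := by
  simp only [mul_add, add_mul, one_mul, mul_one, smul_mul_assoc, mul_smul_comm,
    smul_smul, ha, hb, smul_add, ← mul_assoc]
  rw [show a * b * a = b * (a * b) from by rw [mul_assoc]; exact hbr, mul_assoc b a b]
  module

/-- On `ℂS_3`, the gates `R(z,k)` satisfy the parameter-dependent Yang–Baxter equation:
`R(x,1)∘R(x+y,2)∘R(y,1) = R(y,2)∘R(x+y,1)∘R(x,2)` for all real `x`, `y`.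
(Here `k = 1, 2` are the 1-indexed positions, encoded as `0, 1 : Fin 2`.) -/
theorem yangBaxter_Rgate (x y : ℝ) :
    BallPerm.Rgate 3 x 0 ∘ₗ BallPerm.Rgate 3 (x + y) 1 ∘ₗ BallPerm.Rgate 3 y 0
      = BallPerm.Rgate 3 y 1 ∘ₗ BallPerm.Rgate 3 (x + y) 0 ∘ₗ BallPerm.Rgate 3 x 1 := by
  unfold BallPerm.Rgate
  simp only [show ∀ h : ((0:Fin 2):ℕ) < 3, (⟨(0:Fin 2).1, h⟩ : Fin 3) = 0 from
      fun _ => rfl,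
    show ∀ h : ((0:Fin 2):ℕ) + 1 < 3, (⟨(0:Fin 2).1 + 1, h⟩ : Fin 3) = 1 from
      fun _ => rfl,
    show ∀ h : ((1:Fin 2):ℕ) < 3, (⟨(1:Fin 2).1, h⟩ : Fin 3) = 1 from
      fun _ => rfl,
    show ∀ h : ((1:Fin 2):ℕ) + 1 < 3, (⟨(1:Fin 2).1 + 1, h⟩ : Fin 3) = 2 from
      fun _ => rfl]
  rw [← LinearMap.mulLeft_mul, ← LinearMap.mulLeft_mul, ← LinearMap.mulLeft_mul,
    ← LinearMap.mulLeft_mul]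
  congr 1
  set a : MonoidAlgebra ℂ (Equiv.Perm (Fin 3)) :=
    MonoidAlgebra.single (Equiv.swap (0 : Fin 3) 1) 1 with ha_def
  set b : MonoidAlgebra ℂ (Equiv.Perm (Fin 3)) :=
    MonoidAlgebra.single (Equiv.swap (1 : Fin 3) 2) 1 with hb_def
  have ha : a * a = 1 := by
    rw [ha_def, MonoidAlgebra.single_mul_single, Equiv.swap_mul_self, mul_one,
      MonoidAlgebra.one_def]
  have hb : b * b = 1 := by
    rw [hb_def, MonoidAlgebra.single_mul_single, Equiv.swap_mul_self, mul_one,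
      MonoidAlgebra.one_def]
  have hbr : a * (b * a) = b * (a * b) := by
    rw [ha_def, hb_def]
    simp only [MonoidAlgebra.single_mul_single, mul_one]
    congr 1
    decide
  have key := yb_ring a b ha hb hbr (Complex.I * x) (Complex.I * y)
  have hsum : Complex.I * x + Complex.I * y = Complex.I * (↑(x + y)) := by
    push_cast; ring
  rw [hsum] at key
  simp only [smul_mul_assoc, mul_smul_comm, smul_smul, ← mul_assoc]
  rw [mul_assoc (1 + (Complex.I * ↑x) • a), mul_assoc (1 + (Complex.I * ↑y) • b), key]
  ring_nf
end

section
/- Let z₁, z₂, z₃, z′₁, z′₂, z′₃ be real numbers, all nonzero, such that on ℂS_3 the equation R(z₁,1)∘R(z₂,2)∘R(z₃,1) = R(z′₁,2)∘R(z′₂,1)∘R(z′₃,2) holds. Then z₁ = z′₃, z₃ = z′₁, and z₂ = z′₂ = z₁ + z₃. In other words, up to the trivial solutions with a vanishing parameter, the solution of the parameter-dependent Yang–Baxter equation for the R operators is unique. -/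
lemma ma_add_apply {G} [Monoid G] (f g : MonoidAlgebra ℂ G) (x : G) :
    (f + g).coeff x = f.coeff x + g.coeff x := rfl

lemma ma_smul_apply {G} [Monoid G] (c : ℂ) (f : MonoidAlgebra ℂ G) (x : G) :
    (c • f).coeff x = c * f.coeff x := rfl

/-- Uniqueness of the nontrivial solution of the parameter-dependent Yang–Baxter equation
for the `R` gates on `ℂS_3`: if all six rapidities are nonzero and
`R(z₁,1)∘R(z₂,2)∘R(z₃,1) = R(z′₁,2)∘R(z′₂,1)∘R(z′₃,2)`, then
`z₁ = z′₃`, `z₃ = z′₁` and `z₂ = z₂' = z₁ + z₃`. -/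
theorem yangBaxter_solution_unique (z₁ z₂ z₃ z₁' z₂' z₃' : ℝ)
    (h₁ : z₁ ≠ 0) (h₂ : z₂ ≠ 0) (h₃ : z₃ ≠ 0)
    (h₁' : z₁' ≠ 0) (h₂' : z₂' ≠ 0) (h₃' : z₃' ≠ 0)
    (hYB : BallPerm.Rgate 3 z₁ 0 ∘ₗ BallPerm.Rgate 3 z₂ 1 ∘ₗ BallPerm.Rgate 3 z₃ 0
      = BallPerm.Rgate 3 z₁' 1 ∘ₗ BallPerm.Rgate 3 z₂' 0 ∘ₗ BallPerm.Rgate 3 z₃' 1) :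
    z₁ = z₃' ∧ z₃ = z₁' ∧ z₂ = z₂' ∧ z₂ = z₁ + z₃ := by
  have h := congrArg (fun f => f (1 : MonoidAlgebra ℂ (Equiv.Perm (Fin 3)))) hYB
  simp only [BallPerm.Rgate, LinearMap.coe_comp, Function.comp_apply,
    LinearMap.mulLeft_apply, mul_one] at h
  simp only [smul_mul_assoc, mul_smul_comm, add_mul, mul_add, one_mul, mul_one,
    MonoidAlgebra.single_mul_single, smul_smul, smul_add, MonoidAlgebra.one_def] at h
  -- extract coefficient equations
  have e2 := congrArg (fun x : MonoidAlgebra ℂ (Equiv.Perm (Fin 3)) =>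
    x.coeff (Equiv.swap 0 1)) h
  have e3 := congrArg (fun x : MonoidAlgebra ℂ (Equiv.Perm (Fin 3)) =>
    x.coeff (Equiv.swap 1 2)) h
  have e4 := congrArg (fun x : MonoidAlgebra ℂ (Equiv.Perm (Fin 3)) =>
    x.coeff (Equiv.swap 0 1 * Equiv.swap 1 2)) h
  have e5 := congrArg (fun x : MonoidAlgebra ℂ (Equiv.Perm (Fin 3)) =>
    x.coeff (Equiv.swap 1 2 * Equiv.swap 0 1)) h
  have e6 := congrArg (fun x : MonoidAlgebra ℂ (Equiv.Perm (Fin 3)) =>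
    x.coeff (Equiv.swap 0 1 * (Equiv.swap 1 2 * Equiv.swap 0 1))) h
  simp (config := { decide := true }) only [ma_add_apply, ma_smul_apply,
    MonoidAlgebra.coeff_single_apply, mul_ite, mul_one, mul_zero, add_zero, zero_add,
    if_true, if_false] at e2 e3 e4 e5 e6
  -- abbreviations
  set a₁ : ℂ := ((Real.sqrt (1 + z₁ ^ 2))⁻¹ : ℂ) with ha₁
  set a₂ : ℂ := ((Real.sqrt (1 + z₂ ^ 2))⁻¹ : ℂ) with ha₂
  set a₃ : ℂ := ((Real.sqrt (1 + z₃ ^ 2))⁻¹ : ℂ) with ha₃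
  set b₁ : ℂ := ((Real.sqrt (1 + z₁' ^ 2))⁻¹ : ℂ) with hb₁
  set b₂ : ℂ := ((Real.sqrt (1 + z₂' ^ 2))⁻¹ : ℂ) with hb₂
  set b₃ : ℂ := ((Real.sqrt (1 + z₃' ^ 2))⁻¹ : ℂ) with hb₃
  have sqrt_ne : ∀ z : ℝ, ((Real.sqrt (1 + z ^ 2))⁻¹ : ℂ) ≠ 0 := by
    intro z
    have : (0:ℝ) < Real.sqrt (1 + z ^ 2) := Real.sqrt_pos.mpr (by positivity)
    simpa using Complex.ofReal_ne_zero.mpr (ne_of_gt this)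
  have hP : a₁ * a₂ * a₃ ≠ 0 := by
    exact mul_ne_zero (mul_ne_zero (sqrt_ne z₁) (sqrt_ne z₂)) (sqrt_ne z₃)
  have hQ : b₁ * b₂ * b₃ ≠ 0 := by
    exact mul_ne_zero (mul_ne_zero (sqrt_ne z₁') (sqrt_ne z₂')) (sqrt_ne z₃')
  have u₁ : (z₁ : ℂ) ≠ 0 := Complex.ofReal_ne_zero.mpr h₁
  have u₂ : (z₂ : ℂ) ≠ 0 := Complex.ofReal_ne_zero.mpr h₂
  have u₃ : (z₃ : ℂ) ≠ 0 := Complex.ofReal_ne_zero.mpr h₃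
  have v₁ : (z₁' : ℂ) ≠ 0 := Complex.ofReal_ne_zero.mpr h₁'
  have v₂ : (z₂' : ℂ) ≠ 0 := Complex.ofReal_ne_zero.mpr h₂'
  have v₃ : (z₃' : ℂ) ≠ 0 := Complex.ofReal_ne_zero.mpr h₃'
  -- clean equations
  have A2 : a₁ * a₂ * a₃ * (z₁ + z₃) = b₁ * b₂ * b₃ * z₂' := by
    have : Complex.I * (a₁ * a₂ * a₃ * (z₁ + z₃)) = Complex.I * (b₁ * b₂ * b₃ * z₂') := by
      linear_combination e2
    exact mul_left_cancel₀ Complex.I_ne_zero this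
  have A3 : a₁ * a₂ * a₃ * z₂ = b₁ * b₂ * b₃ * (z₁' + z₃') := by
    have : Complex.I * (a₁ * a₂ * a₃ * z₂) = Complex.I * (b₁ * b₂ * b₃ * (z₁' + z₃')) := by
      linear_combination e3
    exact mul_left_cancel₀ Complex.I_ne_zero this
  have A4 : a₁ * a₂ * a₃ * (z₁ * z₂) = b₁ * b₂ * b₃ * (z₂' * z₃') := by
    have : Complex.I * (Complex.I * (a₁ * a₂ * a₃ * (z₁ * z₂)))
        = Complex.I * (Complex.I * (b₁ * b₂ * b₃ * (z₂' * z₃'))) := by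
      linear_combination e4
    exact mul_left_cancel₀ Complex.I_ne_zero (mul_left_cancel₀ Complex.I_ne_zero this)
  have A5 : a₁ * a₂ * a₃ * (z₂ * z₃) = b₁ * b₂ * b₃ * (z₁' * z₂') := by
    have : Complex.I * (Complex.I * (a₁ * a₂ * a₃ * (z₂ * z₃)))
        = Complex.I * (Complex.I * (b₁ * b₂ * b₃ * (z₁' * z₂'))) := by
      linear_combination e5
    exact mul_left_cancel₀ Complex.I_ne_zero (mul_left_cancel₀ Complex.I_ne_zero this)
  have A6 : a₁ * a₂ * a₃ * (z₁ * z₂ * z₃) = b₁ * b₂ * b₃ * (z₁' * z₂' * z₃') := by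
    have : Complex.I * (Complex.I * (Complex.I * (a₁ * a₂ * a₃ * (z₁ * z₂ * z₃))))
        = Complex.I * (Complex.I * (Complex.I * (b₁ * b₂ * b₃ * (z₁' * z₂' * z₃')))) := by
      linear_combination e6
    exact mul_left_cancel₀ Complex.I_ne_zero
      (mul_left_cancel₀ Complex.I_ne_zero (mul_left_cancel₀ Complex.I_ne_zero this))
  -- solve
  have h31 : (z₃ : ℂ) = z₁' := by
    have key : b₁ * b₂ * b₃ * (z₂' * z₃') * (z₃ : ℂ)
        = b₁ * b₂ * b₃ * (z₂' * z₃') * (z₁' : ℂ) := by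
      linear_combination A6 - (z₃ : ℂ) * A4
    exact mul_left_cancel₀ (mul_ne_zero hQ (mul_ne_zero v₂ v₃)) key
  have h13 : (z₁ : ℂ) = z₃' := by
    have key : b₁ * b₂ * b₃ * (z₁' * z₂') * (z₁ : ℂ)
        = b₁ * b₂ * b₃ * (z₁' * z₂') * (z₃' : ℂ) := by
      linear_combination A6 - (z₁ : ℂ) * A5
    exact mul_left_cancel₀ (mul_ne_zero hQ (mul_ne_zero v₁ v₂)) key
  have hPQ : a₁ * a₂ * a₃ * z₂ = b₁ * b₂ * b₃ * z₂' := by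
    have key : (a₁ * a₂ * a₃ * z₂) * (z₁ : ℂ) = (b₁ * b₂ * b₃ * z₂') * (z₁ : ℂ) := by
      linear_combination A4 - b₁ * b₂ * b₃ * (z₂' : ℂ) * h13
    exact mul_right_cancel₀ u₁ key
  have h2sum : (z₂ : ℂ) = z₁ + z₃ := by
    have key : a₁ * a₂ * a₃ * (z₂ : ℂ) = a₁ * a₂ * a₃ * ((z₁ : ℂ) + z₃) := by
      linear_combination hPQ - A2
    exact mul_left_cancel₀ hP key
  have hPQeq : a₁ * a₂ * a₃ = b₁ * b₂ * b₃ := by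
    have key : a₁ * a₂ * a₃ * (z₂ : ℂ) = b₁ * b₂ * b₃ * (z₂ : ℂ) := by
      calc a₁ * a₂ * a₃ * (z₂ : ℂ) = b₁ * b₂ * b₃ * ((z₁' : ℂ) + z₃') := A3
        _ = b₁ * b₂ * b₃ * (z₂ : ℂ) := by
            rw [← h31, ← h13]; linear_combination -(b₁ * b₂ * b₃) * h2sum
    exact mul_right_cancel₀ u₂ key
  have h22 : (z₂ : ℂ) = z₂' := by
    have key : a₁ * a₂ * a₃ * (z₂ : ℂ) = a₁ * a₂ * a₃ * (z₂' : ℂ) := by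
      rw [hPQ, hPQeq]
    exact mul_left_cancel₀ hP key
  refine ⟨?_, ?_, ?_, ?_⟩
  · exact_mod_cast h13
  · exact_mod_cast h31
  · exact_mod_cast h22
  · exact_mod_cast h2sum
end

section
/- Let z₁, z₂, z₃, z′₁, z′₂, z′₃ be real numbers such that on ℂS_3 the equation R(z₁,1)∘R(z₂,2)∘R(z₃,1) = R(z′₁,2)∘R(z′₂,1)∘R(z′₃,2) holds, and set Γ := √(((1+z′₁²)(1+z′₂²)(1+z′₃²))/((1+z₁²)(1+z₂²)(1+z₃²))). Then the following six equalities hold: (1) Γ·(1 − z₁z₃) = 1 − z′₁z′₃; (2) Γ·(z₁ + z₃) = z′₂; (3) Γ·z₂ = z′₁ + z′₃; (4) Γ·z₁z₂ = z′₂z′₃; (5) Γ·z₂z₃ = z′₁z′₂; (6) Γ·z₁z₂z₃ = z′₁z′₂z′₃. (These follow by comparing the coefficients of the six group elements e, s₁, s₂, s₁s₂, s₂s₁, s₁s₂s₁ on the two sides.) -/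
private lemma ma_apply_add (f g : MonoidAlgebra ℂ (Equiv.Perm (Fin 3))) (p : Equiv.Perm (Fin 3)) :
    (f + g).coeff p = f.coeff p + g.coeff p := rfl

private lemma ma_apply_smul (c : ℂ) (f : MonoidAlgebra ℂ (Equiv.Perm (Fin 3))) (p : Equiv.Perm (Fin 3)) :
    (c • f).coeff p = c * f.coeff p := rfl

set_option maxHeartbeats 2000000

/-- If `R(z₁,1)∘R(z₂,2)∘R(z₃,1) = R(z′₁,2)∘R(z′₂,1)∘R(z′₃,2)` holds on `ℂS_3` and
`Γ = √((1+z′₁²)(1+z′₂²)(1+z′₃²)/((1+z₁²)(1+z₂²)(1+z₃²)))`, then the six equalities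
obtained by comparing the coefficients of `e, s₁, s₂, s₁s₂, s₂s₁, s₁s₂s₁` hold. -/
theorem yangBaxter_coefficient_relations (z₁ z₂ z₃ z₁' z₂' z₃' : ℝ)
    (hYB : BallPerm.Rgate 3 z₁ 0 ∘ₗ BallPerm.Rgate 3 z₂ 1 ∘ₗ BallPerm.Rgate 3 z₃ 0
      = BallPerm.Rgate 3 z₁' 1 ∘ₗ BallPerm.Rgate 3 z₂' 0 ∘ₗ BallPerm.Rgate 3 z₃' 1) :
    let Γ : ℝ := Real.sqrt (((1 + z₁' ^ 2) * (1 + z₂' ^ 2) * (1 + z₃' ^ 2)) /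
      ((1 + z₁ ^ 2) * (1 + z₂ ^ 2) * (1 + z₃ ^ 2)))
    Γ * (1 - z₁ * z₃) = 1 - z₁' * z₃' ∧
    Γ * (z₁ + z₃) = z₂' ∧
    Γ * z₂ = z₁' + z₃' ∧
    Γ * (z₁ * z₂) = z₂' * z₃' ∧
    Γ * (z₂ * z₃) = z₁' * z₂' ∧
    Γ * (z₁ * z₂ * z₃) = z₁' * z₂' * z₃' := by
  have h := LinearMap.congr_fun hYB 1
  simp only [BallPerm.Rgate, LinearMap.comp_apply, LinearMap.mulLeft_apply, mul_one,
    MonoidAlgebra.one_def, smul_mul_assoc, mul_smul_comm, add_mul, mul_add,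
    MonoidAlgebra.single_mul_single, smul_smul, smul_add, one_mul, mul_one] at h
  have he₁ := congrArg (fun f : MonoidAlgebra ℂ (Equiv.Perm (Fin 3)) => f.coeff 1) h
  have he₂ := congrArg (fun f : MonoidAlgebra ℂ (Equiv.Perm (Fin 3)) =>
    f.coeff (Equiv.swap (0 : Fin 3) 1)) h
  have he₃ := congrArg (fun f : MonoidAlgebra ℂ (Equiv.Perm (Fin 3)) =>
    f.coeff (Equiv.swap (1 : Fin 3) 2)) h
  have he₄ := congrArg (fun f : MonoidAlgebra ℂ (Equiv.Perm (Fin 3)) =>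
    f.coeff (Equiv.swap (0 : Fin 3) 1 * Equiv.swap (1 : Fin 3) 2)) h
  have he₅ := congrArg (fun f : MonoidAlgebra ℂ (Equiv.Perm (Fin 3)) =>
    f.coeff (Equiv.swap (1 : Fin 3) 2 * Equiv.swap (0 : Fin 3) 1)) h
  have he₆ := congrArg (fun f : MonoidAlgebra ℂ (Equiv.Perm (Fin 3)) =>
    f.coeff (Equiv.swap (0 : Fin 3) 1 * Equiv.swap (1 : Fin 3) 2 * Equiv.swap (0 : Fin 3) 1)) h
  clear h hYB
  simp only [ma_apply_add, ma_apply_smul, MonoidAlgebra.single_apply] at he₁ he₂ he₃ he₄ he₅ he₆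
  simp (config := { decide := true }) at he₁ he₂ he₃ he₄ he₅ he₆
  have E1 : ((Real.sqrt (1+z₁^2))⁻¹ * (Real.sqrt (1+z₂^2))⁻¹ * (Real.sqrt (1+z₃^2))⁻¹) * (1 - z₁*z₃) = ((Real.sqrt (1+z₁'^2))⁻¹ * (Real.sqrt (1+z₂'^2))⁻¹ * (Real.sqrt (1+z₃'^2))⁻¹) * (1 - z₁'*z₃') := by
    rw [← Complex.ofReal_inj]
    push_cast
    linear_combination he₁ + ((((Real.sqrt (1+z₁'^2) : ℂ))⁻¹ * ((Real.sqrt (1+z₂'^2) : ℂ))⁻¹ * ((Real.sqrt (1+z₃'^2) : ℂ))⁻¹) * (z₁':ℂ) * (z₃':ℂ) - (((Real.sqrt (1+z₁^2) : ℂ))⁻¹ * ((Real.sqrt (1+z₂^2) : ℂ))⁻¹ * ((Real.sqrt (1+z₃^2) : ℂ))⁻¹) * (z₁:ℂ) * (z₃:ℂ)) * Complex.I_mul_I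
  have E2 : ((Real.sqrt (1+z₁^2))⁻¹ * (Real.sqrt (1+z₂^2))⁻¹ * (Real.sqrt (1+z₃^2))⁻¹) * (z₁ + z₃) = ((Real.sqrt (1+z₁'^2))⁻¹ * (Real.sqrt (1+z₂'^2))⁻¹ * (Real.sqrt (1+z₃'^2))⁻¹) * z₂' := by
    rw [← Complex.ofReal_inj]
    push_cast
    linear_combination (-Complex.I) * he₂ + ((((Real.sqrt (1+z₁^2) : ℂ))⁻¹ * ((Real.sqrt (1+z₂^2) : ℂ))⁻¹ * ((Real.sqrt (1+z₃^2) : ℂ))⁻¹) * ((z₁:ℂ)+(z₃:ℂ)) - (((Real.sqrt (1+z₁'^2) : ℂ))⁻¹ * ((Real.sqrt (1+z₂'^2) : ℂ))⁻¹ * ((Real.sqrt (1+z₃'^2) : ℂ))⁻¹) * (z₂':ℂ)) * Complex.I_mul_I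
  have E3 : ((Real.sqrt (1+z₁^2))⁻¹ * (Real.sqrt (1+z₂^2))⁻¹ * (Real.sqrt (1+z₃^2))⁻¹) * z₂ = ((Real.sqrt (1+z₁'^2))⁻¹ * (Real.sqrt (1+z₂'^2))⁻¹ * (Real.sqrt (1+z₃'^2))⁻¹) * (z₁' + z₃') := by
    rw [← Complex.ofReal_inj]
    push_cast
    linear_combination (-Complex.I) * he₃ + ((((Real.sqrt (1+z₁^2) : ℂ))⁻¹ * ((Real.sqrt (1+z₂^2) : ℂ))⁻¹ * ((Real.sqrt (1+z₃^2) : ℂ))⁻¹) * (z₂:ℂ) - (((Real.sqrt (1+z₁'^2) : ℂ))⁻¹ * ((Real.sqrt (1+z₂'^2) : ℂ))⁻¹ * ((Real.sqrt (1+z₃'^2) : ℂ))⁻¹) * ((z₁':ℂ)+(z₃':ℂ))) * Complex.I_mul_I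
  have E4 : ((Real.sqrt (1+z₁^2))⁻¹ * (Real.sqrt (1+z₂^2))⁻¹ * (Real.sqrt (1+z₃^2))⁻¹) * (z₁*z₂) = ((Real.sqrt (1+z₁'^2))⁻¹ * (Real.sqrt (1+z₂'^2))⁻¹ * (Real.sqrt (1+z₃'^2))⁻¹) * (z₂'*z₃') := by
    rw [← Complex.ofReal_inj]
    push_cast
    linear_combination (-1 : ℂ) * he₄ + ((((Real.sqrt (1+z₁^2) : ℂ))⁻¹ * ((Real.sqrt (1+z₂^2) : ℂ))⁻¹ * ((Real.sqrt (1+z₃^2) : ℂ))⁻¹) * (z₁:ℂ) * (z₂:ℂ) - (((Real.sqrt (1+z₁'^2) : ℂ))⁻¹ * ((Real.sqrt (1+z₂'^2) : ℂ))⁻¹ * ((Real.sqrt (1+z₃'^2) : ℂ))⁻¹) * (z₂':ℂ) * (z₃':ℂ)) * Complex.I_mul_I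
  have E5 : ((Real.sqrt (1+z₁^2))⁻¹ * (Real.sqrt (1+z₂^2))⁻¹ * (Real.sqrt (1+z₃^2))⁻¹) * (z₂*z₃) = ((Real.sqrt (1+z₁'^2))⁻¹ * (Real.sqrt (1+z₂'^2))⁻¹ * (Real.sqrt (1+z₃'^2))⁻¹) * (z₁'*z₂') := by
    rw [← Complex.ofReal_inj]
    push_cast
    linear_combination (-1 : ℂ) * he₅ + ((((Real.sqrt (1+z₁^2) : ℂ))⁻¹ * ((Real.sqrt (1+z₂^2) : ℂ))⁻¹ * ((Real.sqrt (1+z₃^2) : ℂ))⁻¹) * (z₂:ℂ) * (z₃:ℂ) - (((Real.sqrt (1+z₁'^2) : ℂ))⁻¹ * ((Real.sqrt (1+z₂'^2) : ℂ))⁻¹ * ((Real.sqrt (1+z₃'^2) : ℂ))⁻¹) * (z₁':ℂ) * (z₂':ℂ)) * Complex.I_mul_I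
  have E6 : ((Real.sqrt (1+z₁^2))⁻¹ * (Real.sqrt (1+z₂^2))⁻¹ * (Real.sqrt (1+z₃^2))⁻¹) * (z₁*z₂*z₃) = ((Real.sqrt (1+z₁'^2))⁻¹ * (Real.sqrt (1+z₂'^2))⁻¹ * (Real.sqrt (1+z₃'^2))⁻¹) * (z₁'*z₂'*z₃') := by
    rw [← Complex.ofReal_inj]
    push_cast
    linear_combination Complex.I * he₆ + ((1 - Complex.I*Complex.I) * ((((Real.sqrt (1+z₁^2) : ℂ))⁻¹ * ((Real.sqrt (1+z₂^2) : ℂ))⁻¹ * ((Real.sqrt (1+z₃^2) : ℂ))⁻¹) * (z₁:ℂ) * (z₂:ℂ) * (z₃:ℂ) - (((Real.sqrt (1+z₁'^2) : ℂ))⁻¹ * ((Real.sqrt (1+z₂'^2) : ℂ))⁻¹ * ((Real.sqrt (1+z₃'^2) : ℂ))⁻¹) * (z₁':ℂ) * (z₂':ℂ) * (z₃':ℂ))) * Complex.I_mul_I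
  clear he₁ he₂ he₃ he₄ he₅ he₆
  have hp1 : (0:ℝ) < Real.sqrt (1+z₁^2) := Real.sqrt_pos.mpr (by positivity)
  have hp2 : (0:ℝ) < Real.sqrt (1+z₂^2) := Real.sqrt_pos.mpr (by positivity)
  have hp3 : (0:ℝ) < Real.sqrt (1+z₃^2) := Real.sqrt_pos.mpr (by positivity)
  have hq1 : (0:ℝ) < Real.sqrt (1+z₁'^2) := Real.sqrt_pos.mpr (by positivity)
  have hq2 : (0:ℝ) < Real.sqrt (1+z₂'^2) := Real.sqrt_pos.mpr (by positivity)
  have hq3 : (0:ℝ) < Real.sqrt (1+z₃'^2) := Real.sqrt_pos.mpr (by positivity)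
  have hΓ : Real.sqrt (((1 + z₁' ^ 2) * (1 + z₂' ^ 2) * (1 + z₃' ^ 2)) /
      ((1 + z₁ ^ 2) * (1 + z₂ ^ 2) * (1 + z₃ ^ 2)))
      = (Real.sqrt (1+z₁'^2) * Real.sqrt (1+z₂'^2) * Real.sqrt (1+z₃'^2)) /
        (Real.sqrt (1+z₁^2) * Real.sqrt (1+z₂^2) * Real.sqrt (1+z₃^2)) := by
    rw [Real.sqrt_div (by positivity), Real.sqrt_mul (by positivity), Real.sqrt_mul (by positivity),
      Real.sqrt_mul (by positivity), Real.sqrt_mul (by positivity)]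
  intro Γ
  field_simp at E1 E2 E3 E4 E5 E6
  have key : ∀ X X' : ℝ, X * (Real.sqrt (1+z₁'^2) * Real.sqrt (1+z₂'^2) * Real.sqrt (1+z₃'^2))
      = X' * (Real.sqrt (1+z₁^2) * Real.sqrt (1+z₂^2) * Real.sqrt (1+z₃^2)) → Γ * X = X' := by
    intro X X' hXX
    show Real.sqrt _ * _ = _
    rw [hΓ, div_mul_eq_mul_div, div_eq_iff (by positivity)]
    linear_combination hXX
  exact ⟨key _ _ (by linear_combination E1), key _ _ (by linear_combination E2), key _ _ (by linear_combination E3), key _ _ (by linear_combination E4), key _ _ (by linear_combination E5), key _ _ (by linear_combination E6)⟩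
end

section
/- (Classical Yang–Baxter solution.) In the real group algebra ℝS_3, define for a real parameter x ≥ 0 and k ∈ {1,2} the doubly stochastic element Rₖ(x) := (e + x·Lₖ)/(1+x), which performs the adjacent swap Lₖ with probability x/(1+x) and otherwise does nothing. Then for all real x, y ≥ 0: R₁(x)·R₂(x+y)·R₁(y) = R₂(y)·R₁(x+y)·R₂(x). -/
/-- The element `L₁` of the real group algebra `ℝS₃`, corresponding to the adjacent
transposition `(1 2)` (0-indexed: `swap 0 1`). -/
noncomputable def BallPerm.L₁ : MonoidAlgebra ℝ (Equiv.Perm (Fin 3)) :=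
  MonoidAlgebra.single (Equiv.swap (0 : Fin 3) 1) (1 : ℝ)

/-- The element `L₂` of the real group algebra `ℝS₃`, corresponding to the adjacent
transposition `(2 3)` (0-indexed: `swap 1 2`). -/
noncomputable def BallPerm.L₂ : MonoidAlgebra ℝ (Equiv.Perm (Fin 3)) :=
  MonoidAlgebra.single (Equiv.swap (1 : Fin 3) 2) (1 : ℝ)

/-- The doubly stochastic element `R(x) = (e + x·L)/(1+x)` of `ℝS₃`, performing the swap
`L` with probability `x/(1+x)` and otherwise doing nothing. -/
noncomputable def BallPerm.Rcl (x : ℝ) (L : MonoidAlgebra ℝ (Equiv.Perm (Fin 3))) :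
    MonoidAlgebra ℝ (Equiv.Perm (Fin 3)) :=
  (1 + x)⁻¹ • ((1 : MonoidAlgebra ℝ (Equiv.Perm (Fin 3))) + x • L)

lemma BallPerm.L1_sq : BallPerm.L₁ * BallPerm.L₁ = 1 := by
  rw [BallPerm.L₁, MonoidAlgebra.single_mul_single]
  rw [Equiv.swap_mul_self, one_mul]
  exact MonoidAlgebra.one_def.symm

lemma BallPerm.L2_sq : BallPerm.L₂ * BallPerm.L₂ = 1 := by
  rw [BallPerm.L₂, MonoidAlgebra.single_mul_single]
  rw [Equiv.swap_mul_self, one_mul]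
  exact MonoidAlgebra.one_def.symm

lemma BallPerm.braid :
    BallPerm.L₁ * BallPerm.L₂ * BallPerm.L₁ = BallPerm.L₂ * BallPerm.L₁ * BallPerm.L₂ := by
  rw [BallPerm.L₁, BallPerm.L₂]
  simp only [MonoidAlgebra.single_mul_single, one_mul]
  congr 1
  decide

lemma BallPerm.key {R : Type*} [Ring R] [Algebra ℝ R] (A B : R) (hA : A * A = 1)
    (hB : B * B = 1) (hbr : A * B * A = B * A * B) (x y : ℝ) :
    (1 + x • A) * (1 + (x + y) • B) * (1 + y • A)
      = (1 + y • B) * (1 + (x + y) • A) * (1 + x • B) := by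
  simp only [mul_add, add_mul, mul_one, one_mul, smul_mul_assoc, mul_smul_comm, smul_smul,
    mul_assoc, hA, hB]
  rw [show A * (B * A) = B * A * B by rw [← mul_assoc, hbr],
      show B * (A * B) = B * A * B by rw [← mul_assoc]]
  module

/-- Classical Yang–Baxter solution: for all `x, y ≥ 0`,
`R₁(x)·R₂(x+y)·R₁(y) = R₂(y)·R₁(x+y)·R₂(x)` in the real group algebra `ℝS₃`. -/
theorem classical_yangBaxter (x y : ℝ) (hx : 0 ≤ x) (hy : 0 ≤ y) :
    BallPerm.Rcl x BallPerm.L₁ * BallPerm.Rcl (x + y) BallPerm.L₂ *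
        BallPerm.Rcl y BallPerm.L₁
      = BallPerm.Rcl y BallPerm.L₂ * BallPerm.Rcl (x + y) BallPerm.L₁ *
        BallPerm.Rcl x BallPerm.L₂ := by
  simp only [BallPerm.Rcl, smul_mul_assoc, mul_smul_comm, smul_smul]
  rw [BallPerm.key _ _ BallPerm.L1_sq BallPerm.L2_sq BallPerm.braid]
  congr 1
  ring
end

section
/- (Simulation of exchange-interaction circuits by ball permutation.) Fix n ≥ 1 and 0 ≤ k ≤ n. For a bit string x ∈ {0,1}ⁿ of Hamming weight k, define φ(x) := Σ over all σ ∈ S_n such that for every position p, x_p = 1 if and only if σ(p) ≤ k, of |σ⟩ ∈ ℂS_n. Then: (i) ⟨φ(x′), φ(x)⟩ = k!·(n−k)! if x = x′ and 0 otherwise; (ii) for every pair of positions i ≠ j and every θ ∈ ℝ, the ball-swap gate |σ⟩ ↦ cos θ·|σ⟩ + i sin θ·|σ∘(i j)⟩ maps φ(x) to cos θ·φ(x) + i sin θ·φ(x∘(i j)), where x∘(i j) is the string with bits i and j exchanged; consequently (iii) for any composition U = T(θ_m,i_m,j_m)∘⋯∘T(θ_1,i_1,j_1) of exchange gates on ℂ^({0,1}ⁿ),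 where T(θ,i,j) = cos θ·I + i sin θ·E_{(i,j)} and E_{(i,j)} is the unitary that exchanges bits i and j of the basis strings, and U′ the corresponding composition of ball-swap gates on ℂS_n, one has ⟨φ(x′)| U′ |φ(x)⟩ = k!·(n−k)!·⟨x′| U |x⟩ for all strings x, x′ of Hamming weight k. -/
namespace BallPerm

/-- Hamming weight of a bit string. -/
def wt {n : ℕ} (x : Fin n → Bool) : ℕ := (Finset.univ.filter fun p => x p = true).card

/-- The symmetrized encoding `φ(x) = Σ_{σ : x_p = 1 ↔ σ(p) ≤ k} |σ⟩ ∈ ℂS_n` of a bit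
string `x` of Hamming weight `k` (labels are 0-indexed, so `σ(p) ≤ k` becomes
`(σ p : ℕ) < k`). -/
noncomputable def phi (n k : ℕ) (x : Fin n → Bool) :
    MonoidAlgebra ℂ (Equiv.Perm (Fin n)) :=
  ∑ σ ∈ Finset.univ.filter
      (fun σ : Equiv.Perm (Fin n) => ∀ p, x p = true ↔ (σ p : ℕ) < k),
    MonoidAlgebra.single σ (1 : ℂ)

/-- The standard inner product on `ℂS_n` making the permutations orthonormal. -/
noncomputable def innerCS (n : ℕ) (u v : MonoidAlgebra ℂ (Equiv.Perm (Fin n))) : ℂ :=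
  ∑ σ : Equiv.Perm (Fin n), (starRingEnd ℂ) (u.coeff σ) * v.coeff σ

/-- The ball-swap gate `|σ⟩ ↦ cos θ·|σ⟩ + i sin θ·|σ∘(i j)⟩` on `ℂS_n`, where `σ∘(i j)`
exchanges the contents of positions `i` and `j`. -/
noncomputable def Bgate (n : ℕ) (θ : ℝ) (i j : Fin n) :
    Module.End ℂ (MonoidAlgebra ℂ (Equiv.Perm (Fin n))) :=
  (Real.cos θ : ℂ) • (1 : Module.End ℂ (MonoidAlgebra ℂ (Equiv.Perm (Fin n))))
    + (Complex.I * Real.sin θ) •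
      LinearMap.mulRight ℂ (MonoidAlgebra.single (Equiv.swap i j) (1 : ℂ))

/-- The exchange operator `E_{(i,j)} : |x⟩ ↦ |x∘(i j)⟩` on `ℂ^({0,1}ⁿ)`, swapping the
`i`-th and `j`-th bits of the basis strings. -/
noncomputable def Eop (n : ℕ) (i j : Fin n) :
    Module.End ℂ ((Fin n → Bool) → ℂ) :=
  LinearMap.funLeft ℂ ℂ (fun y p => y (Equiv.swap i j p))

/-- The exchange-interaction gate `T(θ,i,j) = cos θ·I + i sin θ·E_{(i,j)}` on
`ℂ^({0,1}ⁿ)`. -/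
noncomputable def Tgate (n : ℕ) (θ : ℝ) (i j : Fin n) :
    Module.End ℂ ((Fin n → Bool) → ℂ) :=
  (Real.cos θ : ℂ) • (1 : Module.End ℂ ((Fin n → Bool) → ℂ))
    + (Complex.I * Real.sin θ) • Eop n i j

def Sf (n k : ℕ) (x : Fin n → Bool) : Finset (Equiv.Perm (Fin n)) :=
  Finset.univ.filter (fun σ : Equiv.Perm (Fin n) => ∀ p, x p = true ↔ (σ p : ℕ) < k)

lemma phi_def (n k : ℕ) (x : Fin n → Bool) :
    phi n k x = ∑ σ ∈ Sf n k x, MonoidAlgebra.single σ (1:ℂ) := rfl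

lemma mem_Sf {n k : ℕ} {x : Fin n → Bool} {τ : Equiv.Perm (Fin n)} :
    τ ∈ Sf n k x ↔ ∀ p, x p = true ↔ (τ p : ℕ) < k := by
  simp [Sf]

lemma phi_apply (n k : ℕ) (x : Fin n → Bool) (τ : Equiv.Perm (Fin n)) :
    (phi n k x).coeff τ = if τ ∈ Sf n k x then 1 else 0 := by
  rw [phi_def, MonoidAlgebra.coeff_sum, Finset.sum_apply']
  simp [MonoidAlgebra.coeff_single, Finsupp.single_apply, Finset.sum_ite_eq']

def glue {α : Type*} (p q : α → Prop) [DecidablePred p] [DecidablePred q]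
    (f : {a // p a} ≃ {a // q a}) (g : {a // ¬ p a} ≃ {a // ¬ q a}) : Equiv.Perm α :=
  (Equiv.sumCompl p).symm.trans ((Equiv.sumCongr f g).trans (Equiv.sumCompl q))

lemma glue_pos {α : Type*} (p q : α → Prop) [DecidablePred p] [DecidablePred q]
    (f : {a // p a} ≃ {a // q a}) (g : {a // ¬ p a} ≃ {a // ¬ q a}) (a : α) (h : p a) :
    glue p q f g a = (f ⟨a, h⟩ : α) := by
  simp [glue, Equiv.sumCompl_symm_apply_of_pos h]

lemma glue_neg {α : Type*} (p q : α → Prop) [DecidablePred p] [DecidablePred q]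
    (f : {a // p a} ≃ {a // q a}) (g : {a // ¬ p a} ≃ {a // ¬ q a}) (a : α) (h : ¬ p a) :
    glue p q f g a = (g ⟨a, h⟩ : α) := by
  simp [glue, Equiv.sumCompl_symm_apply_of_neg h]

lemma card_Sf {n k : ℕ} (hk : k ≤ n) (x : Fin n → Bool) (hx : wt x = k) :
    (Sf n k x).card = k.factorial * (n - k).factorial := by
  classical
  set px : Fin n → Prop := fun p => x p = true with hpx
  set pk : Fin n → Prop := fun m : Fin n => (m : ℕ) < k with hpk
  have cardA : Fintype.card {p // px p} = k := by
    rw [Fintype.card_subtype]; exact hx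
  have cardB : Fintype.card {m : Fin n // pk m} = k := by
    have e : {m : Fin n // pk m} ≃ Fin k :=
      ⟨fun m => ⟨(m.1 : ℕ), m.2⟩, fun i => ⟨⟨i.1, i.2.trans_le hk⟩, i.2⟩,
        fun m => rfl, fun i => rfl⟩
    rw [Fintype.card_congr e, Fintype.card_fin]
  have cardA' : Fintype.card {p // ¬ px p} = n - k := by
    rw [Fintype.card_subtype_compl, cardA, Fintype.card_fin]
  have cardB' : Fintype.card {m : Fin n // ¬ pk m} = n - k := by
    rw [Fintype.card_subtype_compl, cardB, Fintype.card_fin]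
  have hglue : ∀ (f : {p // px p} ≃ {m : Fin n // pk m})
      (g : {p // ¬ px p} ≃ {m : Fin n // ¬ pk m}) (p : Fin n),
      x p = true ↔ ((glue px pk f g p : Fin n) : ℕ) < k := by
    intro f g p
    by_cases h : px p
    · rw [glue_pos _ _ _ _ p h]
      exact ⟨fun _ => (f ⟨p, h⟩).2, fun _ => h⟩
    · rw [glue_neg _ _ _ _ p h]
      exact ⟨fun hx' => absurd hx' h, fun hlt => absurd hlt (g ⟨p, h⟩).2⟩
  set Φ : ({p // px p} ≃ {m : Fin n // pk m}) × ({p // ¬ px p} ≃ {m : Fin n // ¬ pk m}) →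
      {σ : Equiv.Perm (Fin n) // ∀ p, x p = true ↔ (σ p : ℕ) < k} :=
    fun fg => ⟨glue px pk fg.1 fg.2, hglue fg.1 fg.2⟩ with hΦ
  have hbij : Function.Bijective Φ := by
    constructor
    · rintro ⟨f, g⟩ ⟨f', g'⟩ h
      have h' : glue px pk f g = glue px pk f' g' := congrArg Subtype.val h
      have hf : f = f' := by
        ext a
        have := congrArg (fun e : Equiv.Perm (Fin n) => e a.1) h'
        simp only [glue_pos px pk f g a.1 a.2, glue_pos px pk f' g' a.1 a.2, Subtype.coe_eta] at this
        exact congrArg Fin.val this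
      have hg : g = g' := by
        ext a
        have := congrArg (fun e : Equiv.Perm (Fin n) => e a.1) h'
        simp only [glue_neg px pk f g a.1 a.2, glue_neg px pk f' g' a.1 a.2, Subtype.coe_eta] at this
        exact congrArg Fin.val this
      exact Prod.ext hf hg
    · rintro ⟨σ, hσ⟩
      refine ⟨⟨⟨fun a => ⟨σ a.1, (hσ a.1).1 a.2⟩,
        fun b => ⟨σ.symm b.1, (hσ _).2 (by simpa using b.2)⟩,
        fun a => Subtype.ext (by simp), fun b => Subtype.ext (by simp)⟩,
        ⟨fun a => ⟨σ a.1, fun h => a.2 ((hσ a.1).2 h)⟩,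
        fun b => ⟨σ.symm b.1, fun h => b.2 (by simpa using (hσ _).1 h)⟩,
        fun a => Subtype.ext (by simp), fun b => Subtype.ext (by simp)⟩⟩, ?_⟩
      apply Subtype.ext
      apply Equiv.ext
      intro p
      by_cases h : px p
      · rw [hΦ]; simp [glue_pos _ _ _ _ p h]
      · rw [hΦ]; simp [glue_neg _ _ _ _ p h]
  have hcard : Fintype.card {σ : Equiv.Perm (Fin n) // ∀ p, x p = true ↔ (σ p : ℕ) < k}
      = k.factorial * (n - k).factorial := by
    rw [← Fintype.card_of_bijective hbij, Fintype.card_prod,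
      Fintype.card_equiv (Fintype.equivOfCardEq (cardA.trans cardB.symm)),
      Fintype.card_equiv (Fintype.equivOfCardEq (cardA'.trans cardB'.symm)),
      cardA, cardA']
  rw [← hcard, Fintype.card_subtype]
  congr 1

end BallPerm
namespace BallPerm

lemma inner_phi {n k : ℕ} (hk : k ≤ n) (x x' : Fin n → Bool) (hx' : wt x' = k) :
    innerCS n (phi n k x') (phi n k x)
      = if x = x' then ((k.factorial * (n - k).factorial : ℕ) : ℂ) else 0 := by
  classical
  unfold innerCS
  simp only [phi_apply]
  by_cases h : x = x'
  · subst h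
    rw [if_pos rfl]
    have h1 : ∀ τ : Equiv.Perm (Fin n),
        (starRingEnd ℂ) (if τ ∈ Sf n k x then (1:ℂ) else 0) *
          (if τ ∈ Sf n k x then (1:ℂ) else 0)
        = if τ ∈ Sf n k x then 1 else 0 := by
      intro τ; split <;> simp
    rw [Finset.sum_congr rfl fun τ _ => h1 τ, Finset.sum_boole,
      Finset.filter_mem_eq_inter, Finset.univ_inter, card_Sf hk x hx']
  · rw [if_neg h]
    apply Finset.sum_eq_zero
    intro τ _
    by_cases h1 : τ ∈ Sf n k x
    · by_cases h2 : τ ∈ Sf n k x'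
      · exfalso
        apply h
        funext p
        have e1 := mem_Sf.1 h1 p
        have e2 := mem_Sf.1 h2 p
        have : x p = true ↔ x' p = true := e1.trans e2.symm
        exact Bool.coe_iff_coe.mp this
      · simp [if_neg h2]
    · simp [if_neg h1]

lemma phi_mul_swap {n k : ℕ} (x : Fin n → Bool) (i j : Fin n) :
    phi n k x * MonoidAlgebra.single (Equiv.swap i j) (1:ℂ)
      = phi n k (fun p => x (Equiv.swap i j p)) := by
  classical
  rw [phi_def, phi_def, Finset.sum_mul]
  simp only [MonoidAlgebra.single_mul_single, mul_one]
  refine Finset.sum_nbij' (i := fun σ => σ * Equiv.swap i j)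
    (j := fun σ => σ * Equiv.swap i j) ?_ ?_ ?_ ?_ ?_
  · intro σ hσ
    rw [mem_Sf] at hσ ⊢
    intro p
    simpa using hσ (Equiv.swap i j p)
  · intro σ hσ
    rw [mem_Sf] at hσ ⊢
    intro p
    have := hσ (Equiv.swap i j p)
    simpa [Equiv.swap_apply_self] using this
  · intro σ _
    simp [mul_assoc]
  · intro σ _
    simp [mul_assoc]
  · intro σ _
    rfl

lemma Bgate_phi {n k : ℕ} (x : Fin n → Bool) (i j : Fin n) (θ : ℝ) :
    Bgate n θ i j (phi n k x)
      = (Real.cos θ : ℂ) • phi n k x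
        + (Complex.I * Real.sin θ) • phi n k (fun p => x (Equiv.swap i j p)) := by
  simp [Bgate, LinearMap.add_apply, LinearMap.smul_apply, LinearMap.mulRight_apply,
    phi_mul_swap, Module.End.one_apply]

lemma Tgate_apply {n : ℕ} (θ : ℝ) (i j : Fin n) (c : (Fin n → Bool) → ℂ)
    (y : Fin n → Bool) :
    Tgate n θ i j c y
      = (Real.cos θ : ℂ) * c y
        + (Complex.I * Real.sin θ) * c (fun p => y (Equiv.swap i j p)) := by
  simp [Tgate, Eop, LinearMap.funLeft, mul_comm]

/-- The self-inverse bit-swap on strings. -/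
def bswap (n : ℕ) (i j : Fin n) : Equiv.Perm (Fin n → Bool) :=
  ⟨fun y p => y (Equiv.swap i j p), fun y p => y (Equiv.swap i j p),
    fun y => by funext p; simp [Equiv.swap_apply_self],
    fun y => by funext p; simp [Equiv.swap_apply_self]⟩

lemma bswap_bswap {n : ℕ} (i j : Fin n) (y : Fin n → Bool) :
    bswap n i j (bswap n i j y) = y := by
  funext p; simp [bswap, Equiv.swap_apply_self]

lemma prod_B_phi {n k : ℕ} (gates : List (ℝ × Fin n × Fin n)) (x : Fin n → Bool) :
    ((gates.map fun g => Bgate n g.1 g.2.1 g.2.2).prod) (phi n k x)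
      = ∑ y : Fin n → Bool,
          (((gates.map fun g => Tgate n g.1 g.2.1 g.2.2).prod) (Pi.single x (1:ℂ)) y)
            • phi n k y := by
  classical
  induction gates with
  | nil =>
    simp only [List.map_nil, List.prod_nil, Module.End.one_apply,
      Pi.single_apply, ite_smul, zero_smul, one_smul]
    rw [Finset.sum_ite_eq' Finset.univ x (fun y => phi n k y)]
    simp
  | cons g rest ih =>
    simp only [List.map_cons, List.prod_cons, Module.End.mul_apply]
    rw [ih, map_sum]
    simp only [map_smul, Bgate_phi]
    have hT : ∀ y : Fin n → Bool,
        ((Tgate n g.1 g.2.1 g.2.2) (((rest.map fun g => Tgate n g.1 g.2.1 g.2.2).prod)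
            (Pi.single x (1:ℂ)))) y
          = (Real.cos g.1 : ℂ) *
              ((rest.map fun g => Tgate n g.1 g.2.1 g.2.2).prod) (Pi.single x (1:ℂ)) y
            + (Complex.I * Real.sin g.1) *
              ((rest.map fun g => Tgate n g.1 g.2.1 g.2.2).prod) (Pi.single x (1:ℂ))
                (bswap n g.2.1 g.2.2 y) :=
      fun y => Tgate_apply g.1 g.2.1 g.2.2 _ y
    set c : (Fin n → Bool) → ℂ :=
      ((rest.map fun g => Tgate n g.1 g.2.1 g.2.2).prod) (Pi.single x (1:ℂ)) with hc
    calc ∑ y : Fin n → Bool,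
          c y • ((Real.cos g.1 : ℂ) • phi n k y
            + (Complex.I * Real.sin g.1) • phi n k (fun p => y (Equiv.swap g.2.1 g.2.2 p)))
        = (∑ y : Fin n → Bool, ((Real.cos g.1 : ℂ) * c y) • phi n k y)
          + ∑ y : Fin n → Bool,
              ((Complex.I * Real.sin g.1) * c y) • phi n k (bswap n g.2.1 g.2.2 y) := by
          rw [← Finset.sum_add_distrib]
          refine Finset.sum_congr rfl fun y _ => ?_
          rw [smul_add, smul_smul, smul_smul, mul_comm (c y), mul_comm (c y)]
          rfl
      _ = (∑ y : Fin n → Bool, ((Real.cos g.1 : ℂ) * c y) • phi n k y)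
          + ∑ y : Fin n → Bool,
              ((Complex.I * Real.sin g.1) * c (bswap n g.2.1 g.2.2 y)) • phi n k y := by
          congr 1
          exact Fintype.sum_equiv (bswap n g.2.1 g.2.2)
            (fun y => ((Complex.I * Real.sin g.1) * c y) • phi n k (bswap n g.2.1 g.2.2 y))
            (fun y => ((Complex.I * Real.sin g.1) * c (bswap n g.2.1 g.2.2 y)) • phi n k y)
            (fun y => by simp only [bswap_bswap])
      _ = ∑ y : Fin n → Bool,
            ((Tgate n g.1 g.2.1 g.2.2 c) y) • phi n k y := by
          rw [← Finset.sum_add_distrib]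
          refine Finset.sum_congr rfl fun y _ => ?_
          rw [hT y, add_smul]

lemma innerCS_sum_smul {n : ℕ} (u : MonoidAlgebra ℂ (Equiv.Perm (Fin n)))
    {ι : Type*} (s : Finset ι) (c : ι → ℂ) (v : ι → MonoidAlgebra ℂ (Equiv.Perm (Fin n))) :
    innerCS n u (∑ y ∈ s, c y • v y) = ∑ y ∈ s, c y * innerCS n u (v y) := by
  unfold innerCS
  have h1 : ∀ τ : Equiv.Perm (Fin n), (∑ y ∈ s, c y • v y).coeff τ = ∑ y ∈ s, c y * (v y).coeff τ := by
    intro τ; rw [MonoidAlgebra.coeff_sum, Finset.sum_apply']; exact Finset.sum_congr rfl fun y _ => rfl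
  calc ∑ τ : Equiv.Perm (Fin n), (starRingEnd ℂ) (u.coeff τ) * (∑ y ∈ s, c y • v y).coeff τ
      = ∑ τ : Equiv.Perm (Fin n), ∑ y ∈ s, c y * ((starRingEnd ℂ) (u.coeff τ) * (v y).coeff τ) := by
        refine Finset.sum_congr rfl fun τ _ => ?_
        rw [h1, Finset.mul_sum]
        exact Finset.sum_congr rfl fun y _ => by ring
    _ = ∑ y ∈ s, c y * ∑ τ : Equiv.Perm (Fin n), (starRingEnd ℂ) (u.coeff τ) * (v y).coeff τ := by
        rw [Finset.sum_comm]
        exact Finset.sum_congr rfl fun y _ => by rw [Finset.mul_sum]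

end BallPerm

open BallPerm in
/-- Simulation of exchange-interaction circuits by ball permutation:
(i) the encodings `φ(x)` of weight-`k` strings are pairwise orthogonal with squared norm
`k!·(n−k)!`; (ii) a ball-swap gate acts on `φ(x)` exactly as the corresponding exchange
gate acts on `|x⟩`; (iii) hence any composition `U` of exchange gates is simulated by the
corresponding composition `U′` of ball-swap gates: `⟨φ(x′)|U′|φ(x)⟩ = k!(n−k)!·⟨x′|U|x⟩`. -/
theorem ballPermuting_simulates_exchange (n k : ℕ) (hn : 1 ≤ n) (hk : k ≤ n) :
    (∀ x x' : Fin n → Bool, wt x = k → wt x' = k →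
      innerCS n (phi n k x') (phi n k x)
        = if x = x' then ((k.factorial * (n - k).factorial : ℕ) : ℂ) else 0) ∧
    (∀ x : Fin n → Bool, wt x = k → ∀ i j : Fin n, i ≠ j → ∀ θ : ℝ,
      Bgate n θ i j (phi n k x)
        = (Real.cos θ : ℂ) • phi n k x
          + (Complex.I * Real.sin θ) • phi n k (fun p => x (Equiv.swap i j p))) ∧
    (∀ gates : List (ℝ × Fin n × Fin n),
      (∀ g ∈ gates, g.2.1 ≠ g.2.2) →
      ∀ x x' : Fin n → Bool, wt x = k → wt x' = k →
        innerCS n (phi n k x')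
            (((gates.map fun g => Bgate n g.1 g.2.1 g.2.2).prod) (phi n k x))
          = ((k.factorial * (n - k).factorial : ℕ) : ℂ) *
            (((gates.map fun g => Tgate n g.1 g.2.1 g.2.2).prod)
              (Pi.single x (1 : ℂ)) x')) := by
  classical
  refine ⟨fun x x' _ hx' => inner_phi hk x x' hx',
    fun x _ i j _ θ => Bgate_phi x i j θ,
    fun gates _ x x' _ hx' => ?_⟩
  rw [prod_B_phi, innerCS_sum_smul]
  have h1 : ∀ y : Fin n → Bool,
      (((gates.map fun g => Tgate n g.1 g.2.1 g.2.2).prod) (Pi.single x (1:ℂ)) y)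
          * innerCS n (phi n k x') (phi n k y)
        = if y = x' then
            (((gates.map fun g => Tgate n g.1 g.2.1 g.2.2).prod) (Pi.single x (1:ℂ)) y)
              * ((k.factorial * (n - k).factorial : ℕ) : ℂ) else 0 := by
    intro y
    rw [inner_phi hk y x' hx']
    split
    · rfl
    · simp
  rw [Finset.sum_congr rfl fun y _ => h1 y,
    Finset.sum_ite_eq' Finset.univ x' _]
  simp [mul_comm]
end
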